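/- Let i > p−2 and let γ ∈ Ĥ_i with J_i(γ) ≠ {0}. Then the Lie ring L_i(γ) = 𝔭^i/J_i(γ) is nilpotent — that is, there exists c ∈ ℕ with W_{c+1}(i) ⊆ J_i(γ) — and its cardinality, the index [𝔭^i : J_i(γ)], is at least p^{2i+3−p}. -/

import Mathlib

set_option synthInstance.maxHeartbeats 1000000
set_option maxHeartbeats 1000000

namespace MaximalClassFrame

variable (p : ℕ) [Fact p.Prime]
variable (K : Type) [Field K] [Algebra ℚ_[p] K] [Algebra ℤ_[p] K]
  [IsScalarTower ℤ_[p] ℚ_[p] K]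

/-- The maximal order `𝒪` of `K`: the integral closure of `ℤ_p` in `K`. -/
noncomputable abbrev 𝒪 : Subalgebra ℤ_[p] K := integralClosure ℤ_[p] K

variable (θ : 𝒪 p K)

/-- The maximal ideal `𝔭` of `𝒪`, generated by `κ = θ - 1`. -/
noncomputable def pid : Ideal (𝒪 p K) := Ideal.span {θ - 1}

/-- A `ℤ_p`-bilinear map `γ : 𝒪 × 𝒪 → 𝒪` is `P`-equivariant if it is
alternating and satisfies `γ(θx, θy) = θ·γ(x,y)` for all `x, y`. -/
def IsPEquivariant (γ : 𝒪 p K →ₗ[ℤ_[p]] 𝒪 p K →ₗ[ℤ_[p]] 𝒪 p K) : Prop :=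
  (∀ x, γ x x = 0) ∧ ∀ x y, γ (θ * x) (θ * y) = θ * γ x y

/-- `γ ∈ Ĥ_i`: the additive subgroup of `𝒪` generated by
`{γ(x,y) : x, y ∈ 𝔭^i}` equals `𝔭^(2i+1)`. -/
def InHhat (i : ℕ) (γ : 𝒪 p K →ₗ[ℤ_[p]] 𝒪 p K →ₗ[ℤ_[p]] 𝒪 p K) : Prop :=
  Submodule.span ℤ (Set.image2 (fun x y => γ x y)
      ((pid p K θ ^ i : Ideal (𝒪 p K)) : Set (𝒪 p K))
      ((pid p K θ ^ i : Ideal (𝒪 p K)) : Set (𝒪 p K)))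
    = (pid p K θ ^ (2 * i + 1)).restrictScalars ℤ

variable (γ : 𝒪 p K →ₗ[ℤ_[p]] 𝒪 p K →ₗ[ℤ_[p]] 𝒪 p K)

/-- The ideal `J_i(γ)` of `𝒪` generated by the Jacobi expressions
`γ(γ(x,y),z) + γ(γ(y,z),x) + γ(γ(z,x),y)` for `x, y, z ∈ 𝔭^i`. -/
noncomputable def Jid (i : ℕ) : Ideal (𝒪 p K) :=
  Ideal.span {v : 𝒪 p K | ∃ x ∈ pid p K θ ^ i, ∃ y ∈ pid p K θ ^ i, ∃ z ∈ pid p K θ ^ i,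
    v = γ (γ x y) z + γ (γ y z) x + γ (γ z x) y}

/-- The ideals `W_k(i)`:  `W_1(i) = 𝔭^i` and `W_{k+1}(i)` is the ideal
generated by `{γ(x,y) : x ∈ W_k(i), y ∈ 𝔭^i}`. -/
noncomputable def Wid (i : ℕ) : ℕ → Ideal (𝒪 p K)
  | 0 => ⊤
  | 1 => pid p K θ ^ i
  | (k + 2) => Ideal.span (Set.image2 (fun x y => γ x y)
      ((Wid i (k + 1) : Ideal (𝒪 p K)) : Set (𝒪 p K))
      ((pid p K θ ^ i : Ideal (𝒪 p K)) : Set (𝒪 p K)))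

/-! ### Auxiliary lemmas -/

section Auxiliary

set_option linter.unusedSectionVars false

variable {p K}

/-- `p` is not a unit in the ring of integers. -/
lemma aux_p_not_unit : ¬ IsUnit (p : 𝒪 p K) := by
  have pp : p.Prime := Fact.out
  haveI : CharZero K := charZero_of_injective_algebraMap (algebraMap ℚ_[p] K).injective
  intro hu
  obtain ⟨t, ht⟩ := isUnit_iff_exists_inv.mp hu
  have htK : (p : K) * (t : K) = 1 := by
    have := congrArg (Subalgebra.val (𝒪 p K)) ht
    simpa using this
  have hpK : (p : K) ≠ 0 := Nat.cast_ne_zero.mpr pp.ne_zero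
  have hpQ : ((p : ℚ_[p])) ≠ 0 := Nat.cast_ne_zero.mpr pp.ne_zero
  have htval : (t : K) = algebraMap ℚ_[p] K ((p : ℚ_[p])⁻¹) := by
    rw [map_inv₀, map_natCast]
    field_simp
    linear_combination htK
  have hint : IsIntegral ℤ_[p] ((t : K)) := t.2
  rw [htval] at hint
  rw [isIntegral_algebraMap_iff (algebraMap ℚ_[p] K).injective] at hint
  obtain ⟨y, hy⟩ := IsIntegrallyClosed.isIntegral_iff.mp hint
  have hyp : y * (p : ℤ_[p]) = 1 := by
    apply IsFractionRing.injective ℤ_[p] ℚ_[p]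
    rw [map_mul, map_one, hy, map_natCast]
    field_simp
  exact (PadicInt.irreducible_p).not_isUnit
    (IsUnit.of_mul_eq_one (a := (p : ℤ_[p])) y (by linear_combination hyp))

/-- In the ring of integers, `(θ-1)^(p-1)` and `p` divide each other. -/
lemma aux_kappa_dvd {θ : 𝒪 p K} (hp : 5 ≤ p) (hθ : IsPrimitiveRoot (θ : K) p) :
    (θ - 1)^(p-1) ∣ ((p : 𝒪 p K)) ∧ ((p : 𝒪 p K)) ∣ (θ - 1)^(p-1) := by
  have pp : p.Prime := Fact.out
  have hθR : IsPrimitiveRoot θ p :=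
    IsPrimitiveRoot.of_map_of_injective (f := Subalgebra.val (𝒪 p K)) hθ Subtype.coe_injective
  obtain ⟨n, hn⟩ : ∃ n, p = n + 1 := ⟨p - 1, by omega⟩
  have hθR' : IsPrimitiveRoot θ (n + 1) := by
    rw [show n + 1 = p from hn.symm]; exact hθR
  have hprod : ∏ k ∈ Finset.range n, (1 - θ ^ (k + 1)) = (p : 𝒪 p K) := by
    rw [IsPrimitiveRoot.prod_one_sub_pow_eq_order hθR']
    have : ((n:ℕ) + 1 : ℕ) = p := hn.symm
    exact_mod_cast congrArg (fun t : ℕ => (t : 𝒪 p K)) this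
  have hfac : ∀ k : ℕ, (1 - θ) ∣ (1 - θ ^ (k+1)) := by
    intro k
    refine ⟨∑ t ∈ Finset.range (k+1), θ ^ t, ?_⟩
    have := geom_sum_mul θ (k+1)
    linear_combination this
  have hfac2 : ∀ k : ℕ, k < n → (1 - θ ^ (k+1)) ∣ (1 - θ) := by
    intro k hk
    have hcop : Nat.Coprime p (k+1) :=
      (Nat.Prime.coprime_iff_not_dvd pp).mpr (fun hdvd => by
        have := Nat.le_of_dvd (by omega) hdvd; omega)
    obtain ⟨m, -, hm⟩ := Nat.exists_mul_mod_eq_one_of_coprime hcop.symm (by omega)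
    have hpow : (θ ^ (k+1)) ^ m = θ := by
      rw [← pow_mul]
      conv_rhs => rw [← pow_one θ]
      conv_lhs => rw [← Nat.div_add_mod ((k+1)*m) p]
      rw [pow_add, pow_mul, hθR.pow_eq_one, one_pow, one_mul, hm]
    refine ⟨∑ t ∈ Finset.range m, (θ^(k+1)) ^ t, ?_⟩
    have := geom_sum_mul (θ^(k+1)) m
    rw [hpow] at this
    linear_combination this
  have heven : Even (p - 1) := by
    obtain ⟨t, ht⟩ := pp.odd_of_ne_two (by omega)
    exact ⟨t, by omega⟩
  have hrw : (θ - 1 : 𝒪 p K)^(p-1) = (1 - θ)^(p-1) := by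
    rw [show (θ : 𝒪 p K) - 1 = -(1 - θ) by ring, heven.neg_pow]
  constructor
  · rw [hrw, ← hprod]
    have h := Finset.prod_dvd_prod_of_dvd (s := Finset.range n) (fun _ => (1:𝒪 p K) - θ)
      (fun k => 1 - θ^(k+1)) (fun k _ => hfac k)
    simpa [Finset.prod_const, Finset.card_range, hn] using h
  · rw [hrw, ← hprod]
    have h := Finset.prod_dvd_prod_of_dvd (s := Finset.range n) (fun k => 1 - θ^(k+1))
      (fun _ => (1:𝒪 p K) - θ) (fun k hk => hfac2 k (Finset.mem_range.mp hk))
    simpa [Finset.prod_const, Finset.card_range, hn] using h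

lemma aux_mem_pid_pow {θ : 𝒪 p K} {e : ℕ} {x : 𝒪 p K} :
    x ∈ pid p K θ ^ e ↔ (θ - 1)^e ∣ x := by
  rw [pid, Ideal.span_singleton_pow, Ideal.mem_span_singleton]

lemma aux_shuffle {A : Type*} [CommRing A] (kp v z : A) (a b k : ℕ) :
    (kp^a * v)^k * (kp^b * z) = kp^(b + k*a) * (v^k * z) := by
  rw [mul_pow, ← pow_mul, show b + k*a = a*k + b by ring, pow_add]
  ring

section WithDvd

variable {θ : 𝒪 p K} {γ : 𝒪 p K →ₗ[ℤ_[p]] 𝒪 p K →ₗ[ℤ_[p]] 𝒪 p K} {i : ℕ}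
variable (hp : 5 ≤ p) (hP : ¬ IsUnit (p : 𝒪 p K))
  (hκp : (θ - 1)^(p-1) ∣ ((p : 𝒪 p K))) (hpκ : ((p : 𝒪 p K)) ∣ (θ - 1)^(p-1))

include hp hP hκp hpκ in
lemma aux_int_small {d : ℤ} (hlt : d.natAbs < p) (hdvd : (θ - 1) ∣ (d : 𝒪 p K)) : d = 0 := by
  have pp : p.Prime := Fact.out
  by_contra hd0
  have hcop : IsCoprime d (p : ℤ) := by
    rw [Int.isCoprime_iff_gcd_eq_one, Int.gcd]
    simp only [Int.natAbs_natCast]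
    refine Nat.Coprime.symm ((Nat.Prime.coprime_iff_not_dvd pp).mpr (fun h => ?_))
    have h0 : 0 < d.natAbs := Int.natAbs_pos.mpr hd0
    have := Nat.le_of_dvd h0 h
    omega
  obtain ⟨u, v, huv⟩ := hcop
  have hR : (u : 𝒪 p K) * (d : 𝒪 p K) + (v : 𝒪 p K) * ((p:ℤ) : 𝒪 p K) = 1 := by
    exact_mod_cast congrArg (fun t : ℤ => (t : 𝒪 p K)) huv
  have hκdvdp : (θ - 1) ∣ ((p : ℕ) : 𝒪 p K) :=
    dvd_trans (dvd_pow_self (θ - 1) (by omega : p - 1 ≠ 0)) hκp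
  have hκ1 : (θ - 1) ∣ (1 : 𝒪 p K) := by
    have h2 : (θ - 1) ∣ ((u : 𝒪 p K) * (d : 𝒪 p K) + (v : 𝒪 p K) * ((p:ℤ) : 𝒪 p K)) := by
      have h3 : ((p : ℤ) : 𝒪 p K) = ((p : ℕ) : 𝒪 p K) := by push_cast; ring
      rw [h3]
      exact dvd_add (Dvd.dvd.mul_left hdvd _) (Dvd.dvd.mul_left hκdvdp _)
    rwa [hR] at h2
  have hκu : IsUnit (θ - 1) := isUnit_of_dvd_one hκ1
  exact hP (isUnit_of_dvd_unit hpκ (hκu.pow _))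

include hp hP hκp hpκ in
lemma aux_digits (hκ0 : (θ : 𝒪 p K) - 1 ≠ 0) :
    ∀ (n c : ℕ) (d : ℕ → ℤ), (∀ j, (d j).natAbs < p) →
      (∑ j ∈ Finset.range n, d j • (θ - 1)^(c+j)) ∈ pid p K θ ^ (c+n) →
      ∀ j < n, d j = 0 := by
  intro n
  induction n with
  | zero => intro c d _ _ j hj; omega
  | succ n ih =>
    intro c d hlt hmem j hj
    rw [Finset.sum_range_succ'] at hmem
    rw [aux_mem_pid_pow] at hmem
    obtain ⟨r, hr⟩ := hmem
    have hX : (θ - 1)^(c+1) ∣ ∑ j ∈ Finset.range n, d (j+1) • (θ - 1)^(c+(j+1)) := by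
      refine Finset.dvd_sum (fun k _ => ?_)
      rw [zsmul_eq_mul]
      exact Dvd.dvd.mul_left (pow_dvd_pow _ (by omega)) _
    obtain ⟨xr, hxr⟩ := hX
    have key : (d 0 : 𝒪 p K) * (θ - 1)^c
        = ((θ - 1) * ((θ - 1)^n * r - xr)) * (θ - 1)^c := by
      rw [zsmul_eq_mul] at hr
      have hr' : (∑ j ∈ Finset.range n, d (j+1) • (θ-1)^(c+(j+1)))
            + (d 0 : 𝒪 p K) * (θ-1)^(c+0)
          = (θ - 1) ^ (c + n + 1) * r := hr
      rw [hxr] at hr'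
      ring_nf at hr' ⊢
      linear_combination hr'
    have hd0 : d 0 = 0 := by
      apply aux_int_small hp hP hκp hpκ (hlt 0)
      exact ⟨_, mul_right_cancel₀ (pow_ne_zero c hκ0) key⟩
    rcases Nat.eq_zero_or_pos j with hj0 | hjpos
    · rw [hj0]; exact hd0
    · obtain ⟨j', rfl⟩ : ∃ j', j = j' + 1 := ⟨j - 1, by omega⟩
      refine ih (c+1) (fun t => d (t+1)) (fun t => hlt (t+1)) ?_ j' (by omega)
      rw [hd0, zero_smul, add_zero] at hr
      rw [aux_mem_pid_pow]
      refine ⟨r, ?_⟩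
      have hre : ∑ j ∈ Finset.range n, d (j+1) • (θ-1)^((c+1)+j)
          = ∑ j ∈ Finset.range n, d (j+1) • (θ-1)^(c+(j+1)) :=
        Finset.sum_congr rfl (fun k _ => by rw [show (c+1)+k = c+(k+1) by omega])
      rw [hre, hr, show c+(n+1) = c+1+n by omega]

lemma aux_gamma_mem (hγi : InHhat p K θ i γ) {x y : 𝒪 p K}
    (hx : x ∈ pid p K θ ^ i) (hy : y ∈ pid p K θ ^ i) :
    γ x y ∈ pid p K θ ^ (2*i+1) := by
  have h1 : γ x y ∈ Submodule.span ℤ (Set.image2 (fun x y => γ x y)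
      ((pid p K θ ^ i : Ideal (𝒪 p K)) : Set (𝒪 p K))
      ((pid p K θ ^ i : Ideal (𝒪 p K)) : Set (𝒪 p K))) :=
    Submodule.subset_span (Set.mem_image2_of_mem hx hy)
  rw [hγi] at h1
  exact h1

variable (hγi : InHhat p K θ i γ)

include hp hκp hpκ hγi in
lemma aux_gamma_gain (k : ℕ) {x y : 𝒪 p K}
    (hx : x ∈ pid p K θ ^ (i + k*(p-1))) (hy : y ∈ pid p K θ ^ i) :
    γ x y ∈ pid p K θ ^ (2*i+1+k*(p-1)) := by
  obtain ⟨w, hw⟩ := hpκ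
  obtain ⟨v, hv⟩ := hκp
  obtain ⟨r, hr⟩ := aux_mem_pid_pow.mp hx
  have hxeq : x = (p : 𝒪 p K)^k * ((θ-1)^i * (w^k * r)) := by
    rw [hr, show i + k*(p-1) = i + (p-1)*k by ring, pow_add, pow_mul, hw]
    ring
  have hx' : (θ-1)^i * (w^k * r) ∈ pid p K θ ^ i :=
    aux_mem_pid_pow.mpr ⟨w^k * r, rfl⟩
  have hsm : x = ((p:ℤ_[p])^k) • ((θ-1)^i * (w^k * r)) := by
    rw [Algebra.smul_def, map_pow, map_natCast]
    exact hxeq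
  have hgeq : γ x y = (p : 𝒪 p K)^k * γ ((θ-1)^i * (w^k * r)) y := by
    rw [hsm, map_smul, LinearMap.smul_apply, Algebra.smul_def, map_pow, map_natCast]
  obtain ⟨z, hz⟩ := aux_mem_pid_pow.mp (aux_gamma_mem hγi hx' hy)
  rw [aux_mem_pid_pow]
  refine ⟨v^k * z, ?_⟩
  rw [hgeq, hz, hv]
  exact aux_shuffle _ _ _ _ _ _

include hp hκp hpκ hγi in
lemma aux_W_le (hpi : p - 1 ≤ i) (k : ℕ) :
    Wid p K θ γ i (k+1) ≤ pid p K θ ^ (i + k*(p-1)) := by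
  induction k with
  | zero => rw [show Wid p K θ γ i 1 = pid p K θ ^ i from rfl]; simp
  | succ k ih =>
    show Wid p K θ γ i (k+2) ≤ _
    rw [show Wid p K θ γ i (k+2) = Ideal.span (Set.image2 (fun x y => γ x y)
      ((Wid p K θ γ i (k + 1) : Ideal (𝒪 p K)) : Set (𝒪 p K))
      ((pid p K θ ^ i : Ideal (𝒪 p K)) : Set (𝒪 p K))) from rfl]
    rw [Ideal.span_le]
    rintro v ⟨x, hx, y, hy, rfl⟩
    have hx' : x ∈ pid p K θ ^ (i + k*(p-1)) := ih hx
    have := aux_gamma_gain hp hκp hpκ hγi k hx' hy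
    have hle : i + (k+1)*(p-1) ≤ 2*i+1+k*(p-1) := by
      have h1 : (k+1)*(p-1) = k*(p-1) + (p-1) := by ring
      omega
    exact Ideal.pow_le_pow_right hle this

include hp hκp hpκ hγi in
lemma aux_J_le (hpi : p - 1 ≤ i) :
    Jid p K θ γ i ≤ pid p K θ ^ (i + (2*i+3-p)) := by
  rw [Jid, Ideal.span_le]
  rintro v ⟨x, hx, y, hy, z, hz, rfl⟩
  obtain ⟨k, r, hkr, hrlt⟩ : ∃ k r, k*(p-1) + r = i+1 ∧ r < p-1 :=
    ⟨(i+1)/(p-1), (i+1)%(p-1), by rw [Nat.mul_comm]; exact Nat.div_add_mod _ _,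
      Nat.mod_lt _ (by omega)⟩
  have hle1 : i + k*(p-1) ≤ 2*i+1 := by omega
  have hle2 : i + (2*i+3-p) ≤ 2*i+1 + k*(p-1) := by omega
  have hterm : ∀ a b c : 𝒪 p K, a ∈ pid p K θ ^ i → b ∈ pid p K θ ^ i → c ∈ pid p K θ ^ i →
      γ (γ a b) c ∈ pid p K θ ^ (i + (2*i+3-p)) := by
    intro a b c ha hb hc
    have h1 : γ a b ∈ pid p K θ ^ (i + k*(p-1)) :=
      Ideal.pow_le_pow_right hle1 (aux_gamma_mem hγi ha hb)
    exact Ideal.pow_le_pow_right hle2 (aux_gamma_gain hp hκp hpκ hγi k h1 hc)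
  exact add_mem (add_mem (hterm _ _ _ hx hy hz) (hterm _ _ _ hy hz hx)) (hterm _ _ _ hz hx hy)

end WithDvd

lemma aux_poly_rec (a : 𝒪 p K) (ha : a ≠ 0) :
    ∀ (n : ℕ) (f : Polynomial ℤ_[p]), f ≠ 0 → f.natDegree ≤ n →
      Polynomial.aeval a f = 0 → ∃ c : ℤ_[p], c ≠ 0 ∧ a ∣ algebraMap ℤ_[p] (𝒪 p K) c := by
  intro n
  induction n with
  | zero =>
    intro f hf hdeg hev
    have hfC : f = Polynomial.C (f.coeff 0) :=
      Polynomial.eq_C_of_natDegree_eq_zero (Nat.le_zero.mp hdeg)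
    have hc0 : f.coeff 0 ≠ 0 := fun h => hf (by rw [hfC, h, map_zero])
    have h1 : algebraMap ℤ_[p] (𝒪 p K) (f.coeff 0) = 0 := by
      rw [← hev, hfC]; simp
    exact ⟨f.coeff 0, hc0, h1 ▸ dvd_zero a⟩
  | succ n ih =>
    intro f hf hdeg hev
    by_cases h0 : f.coeff 0 = 0
    · have hXdiv : Polynomial.X * f.divX = f := by
        conv_rhs => rw [← Polynomial.X_mul_divX_add (p := f)]
        rw [h0, map_zero, add_zero]
      have hdivne : f.divX ≠ 0 := fun h => hf (by rw [← hXdiv, h, mul_zero])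
      have hdeg' : f.divX.natDegree ≤ n := by
        have := Polynomial.natDegree_divX_eq_natDegree_tsub_one (p := f)
        have hdegf : f.natDegree ≤ n + 1 := hdeg
        omega
      have hev' : Polynomial.aeval a f.divX = 0 := by
        have : a * Polynomial.aeval a f.divX = 0 := by
          rw [← hev]
          conv_rhs => rw [← hXdiv]
          simp [mul_comm]
        rcases mul_eq_zero.mp this with h | h
        · exact absurd h ha
        · exact h
      exact ih f.divX hdivne hdeg' hev'
    · refine ⟨f.coeff 0, h0, -(Polynomial.aeval a f.divX), ?_⟩
      have hXd := Polynomial.X_mul_divX_add (p := f)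
      have := congrArg (Polynomial.aeval a) hXd
      simp only [map_add, map_mul, Polynomial.aeval_X, Polynomial.aeval_C] at this
      rw [hev] at this
      linear_combination this

lemma aux_finite_quot (hfd : FiniteDimensional ℚ_[p] K) (e : ℕ) :
    Finite ((𝒪 p K) ⧸ (Ideal.span {(p : 𝒪 p K)^e}).toAddSubgroup) := by
  have pp : p.Prime := Fact.out
  haveI : Module.Finite ℤ_[p] (𝒪 p K) := IsIntegralClosure.finite ℤ_[p] ℚ_[p] K (𝒪 p K)
  obtain ⟨S, hS⟩ := (Module.Finite.fg_top : (⊤ : Submodule ℤ_[p] (𝒪 p K)).FG)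
  haveI : NeZero (p^e) := ⟨pow_ne_zero e pp.ne_zero⟩
  set T : Ideal (𝒪 p K) := Ideal.span {(p : 𝒪 p K)^e} with hT
  let g : ({x // x ∈ S} → ZMod (p^e)) → ((𝒪 p K) ⧸ T.toAddSubgroup) := fun c =>
    QuotientAddGroup.mk (∑ j ∈ S.attach, (((c j).val : ℤ_[p])) • (j : 𝒪 p K))
  apply Finite.of_surjective g
  intro q
  obtain ⟨x, rfl⟩ := QuotientAddGroup.mk_surjective q
  have hx : x ∈ Submodule.span ℤ_[p] ((S : Finset (𝒪 p K)) : Set (𝒪 p K)) := by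
    rw [hS]; trivial
  obtain ⟨f, -, hf⟩ := Submodule.mem_span_finset.mp hx
  refine ⟨fun j => ((((f j).appr e : ℕ)) : ZMod (p^e)), ?_⟩
  show QuotientAddGroup.mk _ = _
  rw [QuotientAddGroup.eq_iff_sub_mem]
  have hval : ∀ j : {x // x ∈ S},
      ((((((f j).appr e : ℕ)) : ZMod (p^e)).val : ℤ_[p]))
        = (((f (j:𝒪 p K)).appr e : ℕ) : ℤ_[p]) := by
    intro j
    rw [ZMod.val_cast_of_lt (PadicInt.appr_lt _ _)]
  have hsum : (∑ j ∈ S.attach, ((((((f j).appr e : ℕ)) : ZMod (p^e)).val : ℤ_[p])) • (j : 𝒪 p K))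
      = ∑ j ∈ S, (((f j).appr e : ℕ) : ℤ_[p]) • j := by
    rw [← Finset.sum_attach S (fun j => (((f j).appr e : ℕ) : ℤ_[p]) • j)]
    exact Finset.sum_congr rfl (fun j _ => by rw [hval j])
  show (∑ j ∈ S.attach, _) - x ∈ T.toAddSubgroup
  rw [hsum, ← hf]
  rw [← Finset.sum_sub_distrib]
  refine AddSubgroup.sum_mem _ (fun j hj => ?_)
  have heq : (((f j).appr e : ℕ) : ℤ_[p]) • j - f j • j
      = -(((f j - ((f j).appr e : ℕ)) : ℤ_[p]) • j) := by
    rw [← neg_smul, neg_sub, sub_smul]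
  rw [heq]
  refine neg_mem ?_
  have hspec := PadicInt.appr_spec e (f j)
  obtain ⟨t, ht⟩ := Ideal.mem_span_singleton.mp hspec
  show ((f j - ((f j).appr e : ℕ)) : ℤ_[p]) • (j : 𝒪 p K) ∈ T
  rw [ht, Algebra.smul_def, map_mul, map_pow, map_natCast]
  have hpe : ((p : 𝒪 p K)^e) ∈ T := Ideal.subset_span (Set.mem_singleton _)
  exact Ideal.mul_mem_right _ _ (Ideal.mul_mem_right _ _ hpe)

end Auxiliary

/-- For `i > p−2` and `γ ∈ Ĥ_i` with `J_i(γ) ≠ 0`, the Lie ring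
`L_i(γ) = 𝔭^i/J_i(γ)` is nilpotent (some `W_{c+1}(i) ⊆ J_i(γ)`), and the index
`[𝔭^i : J_i(γ)]` is at least `p^{2i+3−p}`. -/
theorem frame_L_nilpotent_and_size (hp : 5 ≤ p) (hθ : IsPrimitiveRoot (θ : K) p)
    (hgen : Algebra.adjoin ℚ_[p] {(θ : K)} = ⊤)
    (hγ : IsPEquivariant p K θ γ)
    (i : ℕ) (hi : p - 2 < i) (hγi : InHhat p K θ i γ) (hJ : Jid p K θ γ i ≠ ⊥) :
    (∃ c : ℕ, Wid p K θ γ i (c + 1) ≤ Jid p K θ γ i) ∧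
    p ^ (2 * i + 3 - p) ≤
      ((Jid p K θ γ i).toAddSubgroup).relIndex ((pid p K θ ^ i : Ideal (𝒪 p K)).toAddSubgroup) := by
  have pp : p.Prime := Fact.out
  have hpi : p - 1 ≤ i := by omega
  obtain ⟨hκp, hpκ⟩ := aux_kappa_dvd hp hθ
  have hP : ¬ IsUnit (p : 𝒪 p K) := aux_p_not_unit
  have hκ0 : (θ : 𝒪 p K) - 1 ≠ 0 := by
    intro h
    have h1 : θ = 1 := by linear_combination h
    exact hθ.ne_one (by omega) (by rw [h1]; rfl)
  -- finite dimensionality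
  have hint : IsIntegral ℚ_[p] ((θ : K)) := by
    refine ⟨Polynomial.X^p - Polynomial.C 1, Polynomial.monic_X_pow_sub_C 1 pp.ne_zero, ?_⟩
    simp [hθ.pow_eq_one]
  haveI hfd : FiniteDimensional ℚ_[p] K := by
    refine ⟨?_⟩
    rw [← Algebra.top_toSubmodule, ← hgen]
    exact hint.fg_adjoin_singleton
  -- a nonzero element of `J`, and a power of `p` inside `J`
  obtain ⟨a, haJ, ha0⟩ := Submodule.exists_mem_ne_zero_of_ne_bot hJ
  obtain ⟨f, hfm, hfev⟩ := (a.2 : IsIntegral ℤ_[p] (a : K))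
  have haev : Polynomial.aeval a f = 0 := by
    apply Subtype.coe_injective
    have h2 := Polynomial.aeval_algHom_apply (Subalgebra.val (𝒪 p K)) a f
    calc ((Polynomial.aeval a f : 𝒪 p K) : K)
        = Polynomial.aeval ((a : K)) f := h2.symm
      _ = Polynomial.eval₂ (algebraMap ℤ_[p] K) (↑a) f := by rw [Polynomial.aeval_def]
      _ = 0 := hfev
  obtain ⟨c, hc0, hdvd⟩ := aux_poly_rec a ha0 f.natDegree f hfm.ne_zero le_rfl haev
  obtain ⟨m, u, hcu⟩ := IsDiscreteValuationRing.eq_unit_mul_pow_irreducible hc0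
    PadicInt.irreducible_p
  rw [hcu, map_mul, map_pow, map_natCast] at hdvd
  have hUu : IsUnit (algebraMap ℤ_[p] (𝒪 p K) (u : ℤ_[p])) := (Units.isUnit u).map _
  have hpm_dvd : a ∣ (p : 𝒪 p K)^m := by
    have h1 := hUu.unit.inv_mul_cancel_left ((p : 𝒪 p K)^m)
    rw [hUu.unit_spec] at h1
    rw [← h1]
    exact Dvd.dvd.mul_left hdvd _
  have hpmJ : (p : 𝒪 p K)^m ∈ Jid p K θ γ i := by
    obtain ⟨t, ht⟩ := hpm_dvd
    rw [ht]
    exact Ideal.mul_mem_right _ _ haJ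
  constructor
  · -- nilpotency
    refine ⟨m, le_trans (aux_W_le hp hκp hpκ hγi hpi m) ?_⟩
    intro x hx
    obtain ⟨r, hr⟩ := aux_mem_pid_pow.mp hx
    obtain ⟨w, hw⟩ := hpκ
    have hxe : x = ((θ - 1)^i * w^m * r) * (p : 𝒪 p K)^m := by
      rw [hr, show i+m*(p-1) = i+(p-1)*m by ring, pow_add, pow_mul, hw]
      ring
    rw [hxe]
    exact Ideal.mul_mem_left _ _ hpmJ
  · -- the size bound
    have hJle := aux_J_le hp hκp hpκ hγi hpi
    set s := 2*i+3-p with hs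
    set P := (pid p K θ ^ i : Ideal (𝒪 p K)).toAddSubgroup with hPdef
    set J' := (Jid p K θ γ i).toAddSubgroup with hJ'def
    -- finiteness of the quotient
    set T : Ideal (𝒪 p K) := Ideal.span {(p : 𝒪 p K)^m} with hTdef
    have hTJ : T.toAddSubgroup ≤ J' := by
      intro x hx
      exact (Ideal.span_le.mpr (Set.singleton_subset_iff.mpr hpmJ)) hx
    haveI hfin1 : Finite ((𝒪 p K) ⧸ T.toAddSubgroup) := aux_finite_quot hfd m
    let φ : ↥P →+ ((𝒪 p K) ⧸ T.toAddSubgroup) :=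
      (QuotientAddGroup.mk' T.toAddSubgroup).comp P.subtype
    haveI hfin2 : Finite (↥P ⧸ φ.ker) :=
      Finite.of_injective _ (QuotientAddGroup.kerLift_injective φ)
    have hkerle : φ.ker ≤ J'.addSubgroupOf P := by
      intro x hx
      rw [AddMonoidHom.mem_ker] at hx
      have hxT : (x : 𝒪 p K) ∈ T.toAddSubgroup := by
        rwa [← QuotientAddGroup.eq_zero_iff (x : 𝒪 p K)]
      exact AddSubgroup.mem_addSubgroupOf.mpr (hTJ hxT)
    let ψ : (↥P ⧸ φ.ker) →+ (↥P ⧸ J'.addSubgroupOf P) :=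
      QuotientAddGroup.map φ.ker (J'.addSubgroupOf P) (AddMonoidHom.id _)
        (fun x hx => hkerle hx)
    have hψs : Function.Surjective ψ := by
      intro q
      obtain ⟨x, rfl⟩ := QuotientAddGroup.mk_surjective q
      exact ⟨QuotientAddGroup.mk x, QuotientAddGroup.map_mk _ _ _ _ _⟩
    haveI hfin3 : Finite (↥P ⧸ J'.addSubgroupOf P) := Finite.of_surjective ψ hψs
    -- the injection giving the lower bound
    haveI : NeZero p := ⟨pp.ne_zero⟩
    have heltmem : ∀ (d : ℕ → ℤ),
        (∑ j ∈ Finset.range s, d j • ((θ : 𝒪 p K) - 1)^(i+j)) ∈ pid p K θ ^ i := by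
      intro d
      refine sum_mem (fun j hj => ?_)
      refine zsmul_mem ?_ _
      exact aux_mem_pid_pow.mpr (pow_dvd_pow _ (by omega))
    let dc : (Fin s → ZMod p) → ℕ → ℤ := fun c j => if h : j < s then ((c ⟨j, h⟩).val : ℤ) else 0
    let F : (Fin s → ZMod p) → (↥P ⧸ J'.addSubgroupOf P) := fun c =>
      QuotientAddGroup.mk ⟨∑ j ∈ Finset.range s, dc c j • ((θ : 𝒪 p K) - 1)^(i+j), heltmem _⟩
    have hFinj : Function.Injective F := by
      intro c1 c2 hF
      have hsub : (⟨∑ j ∈ Finset.range s, dc c1 j • ((θ : 𝒪 p K) - 1)^(i+j), heltmem _⟩ -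
          ⟨∑ j ∈ Finset.range s, dc c2 j • ((θ : 𝒪 p K) - 1)^(i+j), heltmem _⟩ : ↥P)
          ∈ J'.addSubgroupOf P := by
        exact (QuotientAddGroup.eq_iff_sub_mem).mp hF
      have hsub2 : (∑ j ∈ Finset.range s, (dc c1 j - dc c2 j) • ((θ : 𝒪 p K) - 1)^(i+j))
          ∈ Jid p K θ γ i := by
        have h0 : ((⟨∑ j ∈ Finset.range s, dc c1 j • ((θ : 𝒪 p K) - 1)^(i+j), heltmem _⟩ -
            ⟨∑ j ∈ Finset.range s, dc c2 j • ((θ : 𝒪 p K) - 1)^(i+j), heltmem _⟩ : ↥P) : 𝒪 p K)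
            ∈ J' := AddSubgroup.mem_addSubgroupOf.mp hsub
        have h1 : ((⟨∑ j ∈ Finset.range s, dc c1 j • ((θ : 𝒪 p K) - 1)^(i+j), heltmem _⟩ -
            ⟨∑ j ∈ Finset.range s, dc c2 j • ((θ : 𝒪 p K) - 1)^(i+j), heltmem _⟩ : ↥P) : 𝒪 p K)
            = ∑ j ∈ Finset.range s, (dc c1 j - dc c2 j) • ((θ : 𝒪 p K) - 1)^(i+j) := by
          rw [AddSubgroup.coe_sub, ← Finset.sum_sub_distrib]
          exact Finset.sum_congr rfl (fun j _ => by rw [sub_smul])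
        rw [h1] at h0
        exact h0
      have hmem : (∑ j ∈ Finset.range s, (dc c1 j - dc c2 j) • ((θ : 𝒪 p K) - 1)^(i+j))
          ∈ pid p K θ ^ (i+s) := hJle hsub2
      have hzero := aux_digits hp hP hκp hpκ hκ0 s i (fun j => dc c1 j - dc c2 j)
        (fun j => by
          show (dc c1 j - dc c2 j).natAbs < p
          by_cases h : j < s
          · simp only [dc, dif_pos h]
            have h1 := ZMod.val_lt (c1 ⟨j, h⟩)
            have h2 := ZMod.val_lt (c2 ⟨j, h⟩)
            omega
          · have hz : dc c1 j - dc c2 j = 0 := by simp [dc, dif_neg h]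
            rw [hz]
            simpa using pp.pos) hmem
      funext j
      have hj : dc c1 j.1 - dc c2 j.1 = 0 := hzero j.1 j.2
      have hdceq : dc c1 j.1 = dc c2 j.1 := by omega
      simp only [dc, dif_pos j.2] at hdceq
      have hvals : (c1 ⟨j.1, j.2⟩).val = (c2 ⟨j.1, j.2⟩).val := by exact_mod_cast hdceq
      have := ZMod.val_injective p hvals
      simpa [Fin.eta] using this
    -- conclude
    have hcard : Nat.card (Fin s → ZMod p) = p ^ s := by
      rw [Nat.card_eq_fintype_card, Fintype.card_fun, ZMod.card, Fintype.card_fin]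
    have hle := Nat.card_le_card_of_injective F hFinj
    rw [hcard] at hle
    show p ^ s ≤ J'.relIndex P
    rw [show J'.relIndex P = (J'.addSubgroupOf P).index from rfl,
      AddSubgroup.index_eq_card]
    exact hle

end MaximalClassFrame
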